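/- Let k ≥ 2 be an integer and let a, b be real numbers with 0 ≤ a < 1 < b. If ∑_{i=1}^{k-1} b^i = ∑_{i=1}^{k-1} a^i + k(1 - a^{k-1}), then 2(1-a)(1 - a^k - k(1-a)a^{k-1} - (k(k-1)/2)(1-a)^2 a^{k-2}) < (b-1)(a^k + k(1-a) + k(k-1)(1-a)^2 - 1). -/

import Mathlib

open Finset

private lemma choose_bound (m : ℕ) : ∀ i : ℕ,
    Nat.choose (m+2) (2+i) * 3^i ≤ Nat.choose (m+2) 2 * m^i := by
  intro i
  induction i with
  | zero => simp
  | succ n ih =>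
    have key : 3 * (m+2).choose (2+(n+1)) ≤ m * (m+2).choose (2+n) := by
      have h := Nat.choose_succ_right_eq (m+2) (n+2)
      have h1 : 2+(n+1) = (n+2)+1 := by omega
      rw [h1]
      calc 3 * (m+2).choose ((n+2)+1)
          ≤ ((n+2)+1) * (m+2).choose ((n+2)+1) := by
            exact Nat.mul_le_mul_right _ (by omega)
        _ = (m+2).choose (n+2) * (m+2-(n+2)) := by rw [mul_comm]; exact h
        _ ≤ (m+2).choose (n+2) * m := Nat.mul_le_mul_left _ (by omega)
        _ = m * (m+2).choose (2+n) := by rw [mul_comm, Nat.add_comm 2 n]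
    calc (m+2).choose (2+(n+1)) * 3^(n+1)
        = (3 * (m+2).choose (2+(n+1))) * 3^n := by ring
      _ ≤ (m * (m+2).choose (2+n)) * 3^n := Nat.mul_le_mul_right _ key
      _ = m * ((m+2).choose (2+n) * 3^n) := by ring
      _ ≤ m * ((m+2).choose 2 * m^n) := Nat.mul_le_mul_left _ ih
      _ = (m+2).choose 2 * m^(n+1) := by ring

private lemma choose_two_cast (m : ℕ) : ((m+2).choose 2 : ℝ) = ((m:ℝ)+2)*((m:ℝ)+1)/2 := by
  have hdvd : 2 ∣ (m+2)*(m+1) := by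
    rcases Nat.even_or_odd m with ⟨r, hr⟩ | ⟨r, hr⟩
    · exact ⟨(r+1)*(r+r+1), by subst hr; ring⟩
    · exact ⟨(r+r+3)*(r+1), by subst hr; ring⟩
  rw [Nat.choose_two_right, show m+2-1 = m+1 from rfl,
    Nat.cast_div hdvd (by norm_num : (2:ℝ) ≠ 0)]
  push_cast; ring

set_option maxHeartbeats 2000000 in
theorem stmt_4 (k : ℕ) (hk : 2 ≤ k) (a b : ℝ) (ha : 0 ≤ a) (ha1 : a < 1) (hb : 1 < b)
    (hyp : ∑ i ∈ Finset.Icc 1 (k - 1), b ^ i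
      = ∑ i ∈ Finset.Icc 1 (k - 1), a ^ i + k * (1 - a ^ (k - 1))) :
    2 * (1 - a) * (1 - a ^ k - k * (1 - a) * a ^ (k - 1)
        - (k * (k - 1) / 2) * (1 - a) ^ 2 * a ^ (k - 2))
      < (b - 1) * (a ^ k + k * (1 - a) + k * (k - 1) * (1 - a) ^ 2 - 1) := by
  obtain ⟨m, rfl⟩ : ∃ m, k = m + 2 := ⟨k - 2, by omega⟩
  rw [show m + 2 - 1 = m + 1 from rfl] at hyp ⊢
  rw [show m + 2 - 2 = m from rfl]
  rw [show a ^ (m+1) = a * a^m by ring] at hyp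
  rw [show a ^ (m+2) = a^2 * a^m by ring, show a ^ (m+1) = a * a^m by ring]
  push_cast at hyp ⊢
  have hM0 : (0:ℝ) ≤ (m:ℝ) := Nat.cast_nonneg m
  have ht : 0 < 1 - a := by linarith
  have ht1 : 1 - a ≤ 1 := by linarith
  have hA0 : 0 ≤ a ^ m := pow_nonneg ha m
  have hA1 : a ^ m ≤ 1 := pow_le_one₀ ha ha1.le
  -- Bernoulli facts
  have hBer : 1 + (m:ℝ) * (a - 1) ≤ a ^ m := by
    have h := one_add_mul_le_pow (by linarith : (-2:ℝ) ≤ a - 1) m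
    rw [show (1:ℝ) + (a-1) = a by ring] at h
    exact h
  have hBer2 : 1 + ((m:ℝ) + 2) * (a - 1) ≤ a^2 * a^m := by
    have h := one_add_mul_le_pow (by linarith : (-2:ℝ) ≤ a - 1) (m+2)
    rw [show (1:ℝ) + (a-1) = a by ring] at h
    push_cast at h
    calc 1 + ((m:ℝ)+2)*(a-1) ≤ a ^ (m+2) := h
      _ = a^2 * a^m := by ring
  -- R > 0
  have hR : 0 < a^2 * a^m + ((m:ℝ)+2)*(1-a) + ((m:ℝ)+2)*((m:ℝ)+1)*(1-a)^2 - 1 := by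
    nlinarith [hBer2, pow_pos ht 2, mul_nonneg (mul_nonneg hM0 (sq_nonneg (1-a))) hM0,
      mul_nonneg hM0 (sq_nonneg (1-a))]
  rw [show ((m:ℝ)+2)-1 = (m:ℝ)+1 by ring]
  -- nonneg pieces
  have n1 : 0 ≤ a^2*a^m := mul_nonneg (sq_nonneg a) hA0
  have n2 : 0 ≤ ((m:ℝ)+2)*(1-a)*(a*a^m) :=
    mul_nonneg (mul_nonneg (by linarith) ht.le) (mul_nonneg ha hA0)
  have n3 : 0 ≤ (((m:ℝ)+2)*((m:ℝ)+1)/2)*(1-a)^2*a^m :=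
    mul_nonneg (mul_nonneg (by nlinarith) (sq_nonneg (1-a))) hA0
  rcases le_or_gt (1 - a^2*a^m - ((m:ℝ)+2)*(1-a)*(a*a^m)
      - (((m:ℝ)+2)*((m:ℝ)+1)/2)*(1-a)^2*a^m) 0 with hL | hL
  · have h1 : 0 < (b-1)*(a^2*a^m + ((m:ℝ)+2)*(1-a) + ((m:ℝ)+2)*((m:ℝ)+1)*(1-a)^2 - 1) :=
      mul_pos (by linarith) hR
    have h2 : 2*(1-a)*(1 - a^2*a^m - ((m:ℝ)+2)*(1-a)*(a*a^m)
        - (((m:ℝ)+2)*((m:ℝ)+1)/2)*(1-a)^2*a^m) ≤ 0 :=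
      mul_nonpos_of_nonneg_of_nonpos (by linarith) hL
    linarith only [h1, h2]
  -- main branch : L > 0
  have hm : 1 ≤ m := by
    by_contra hcon
    have hmz : m = 0 := by omega
    subst hmz
    norm_num at hL
    linarith [hL]
  -- sum of a^i
  have hSa : (1-a) * (∑ i ∈ Finset.Icc 1 (m+1), a^i) = a - a^2*a^m := by
    rw [show Finset.Icc 1 (m+1) = Finset.Ico 1 (m+2) from (Finset.Ico_add_one_right_eq_Icc 1 (m+1)).symm]
    rw [Finset.sum_Ico_eq_sum_range, show m+2-1 = m+1 from rfl]
    have h3 : ∑ i ∈ Finset.range (m+1), a^(1+i) = a * ∑ i ∈ Finset.range (m+1), a^i := by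
      rw [Finset.mul_sum]
      exact Finset.sum_congr rfl (fun i _ => by rw [pow_add, pow_one])
    have h4 := geom_sum_mul a (m+1)
    rw [show a^(m+1) = a*a^m by ring] at h4
    rw [h3]
    linear_combination (-a) * h4
  have hEt : (1-a)*((∑ i ∈ Finset.Icc 1 (m+1), a^i) + ((m:ℝ)+2)*(1 - a*a^m) - ((m:ℝ)+1))
      = 1 - a^2*a^m - ((m:ℝ)+2)*(1-a)*(a*a^m) := by
    linear_combination hSa
  obtain ⟨Ee, hEe⟩ : ∃ x, (∑ i ∈ Finset.Icc 1 (m+1), a^i) + ((m:ℝ)+2)*(1 - a*a^m) - ((m:ℝ)+1) = x :=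
    ⟨_, rfl⟩
  rw [hEe] at hEt
  have hEL : (1-a)*Ee = (1 - a^2*a^m - ((m:ℝ)+2)*(1-a)*(a*a^m)
      - (((m:ℝ)+2)*((m:ℝ)+1)/2)*(1-a)^2*a^m) + (((m:ℝ)+2)*((m:ℝ)+1)/2)*(1-a)^2*a^m := by
    rw [hEt]; ring
  have hEpos : 0 < Ee := by
    have h1 : 0 < (1-a)*Ee := by rw [hEL]; linarith
    by_contra hcon
    push_neg at hcon
    linarith [h1, mul_nonpos_of_nonneg_of_nonpos ht.le hcon]
  have hyp' : ∑ i ∈ Finset.Icc 1 (m+1), b^i = ((m:ℝ)+1) + Ee := by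
    rw [hyp, ← hEe]; ring
  -- key inequality B* : 2*m*(1-a)*L < 3*G   where G = a^2*a^m + (m+2)(1-a) - 1
  have hL1 : (1 - a^2*a^m - ((m:ℝ)+2)*(1-a)*(a*a^m)
      - (((m:ℝ)+2)*((m:ℝ)+1)/2)*(1-a)^2*a^m) ≤ 1 := by linarith
  have hBstar : 2*(m:ℝ)*(1-a)*(1 - a^2*a^m - ((m:ℝ)+2)*(1-a)*(a*a^m)
      - (((m:ℝ)+2)*((m:ℝ)+1)/2)*(1-a)^2*a^m) < 3*(a^2*a^m + ((m:ℝ)+2)*(1-a) - 1) := by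
    rcases le_or_gt ((1-a)*((m:ℝ)+6)) 3 with hcase | hcase
    · -- case (ii) : need G ≥ 2L via sum lemma
      have hKt3 : (m:ℝ)*(1-a) < 3 := by nlinarith [ht]
      have hGpos : 0 < a^2*a^m + ((m:ℝ)+2)*(1-a) - 1 := by
        have hint : a^2*(1 + (m:ℝ)*(a-1)) ≤ a^2*a^m :=
          mul_le_mul_of_nonneg_left hBer (sq_nonneg a)
        have h2 : 0 ≤ (m:ℝ)*(1-a)^2*(1+a) :=
          mul_nonneg (mul_nonneg hM0 (sq_nonneg (1-a))) (by linarith)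
        have h3 : 0 < (1-a)^2 := pow_pos ht 2
        linarith [hint, h2, h3]
      -- Sum lemma
      have hS0 : ∑ j ∈ Finset.range (m+2+1),
          (1-a)^j * a^(m+2-j) * ((m+2).choose j : ℝ) = 1 := by
        rw [← add_pow]; norm_num
      have hbin : ∑ x ∈ Finset.range (m+1+1),
          (1-a)^x * a^(m+1-x) * ((m+1).choose x : ℝ) = 1 := by
        rw [← add_pow]; norm_num
      have hS1 : ∑ j ∈ Finset.range (m+2+1),
          (j:ℝ) * ((1-a)^j * a^(m+2-j) * ((m+2).choose j : ℝ)) = ((m:ℝ)+2)*(1-a) := by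
        rw [show m+2+1 = 1+(m+2) by omega, Finset.sum_range_add]
        have h0 : ∑ j ∈ Finset.range 1,
            (j:ℝ) * ((1-a)^j * a^(m+2-j) * ((m+2).choose j : ℝ)) = 0 := by simp
        rw [h0]
        have hcongr : ∀ x ∈ Finset.range (m+2),
            ((1+x : ℕ):ℝ) * ((1-a)^(1+x) * a^(m+2-(1+x)) * ((m+2).choose (1+x) : ℝ))
            = ((m:ℝ)+2)*(1-a) * ((1-a)^x * a^(m+1-x) * ((m+1).choose x : ℝ)) := by
          intro x _
          have hnat : (m+2) * (m+1).choose x = (m+2).choose (x+1) * (x+1) := by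
            have := Nat.add_one_mul_choose_eq (m+1) x
            simpa [Nat.succ_eq_add_one] using this
          have hcast : ((m:ℝ)+2) * ((m+1).choose x : ℝ)
              = ((m+2).choose (x+1) : ℝ) * ((x:ℝ)+1) := by
            exact_mod_cast hnat
          rw [show m+2-(1+x) = m+1-x by omega, show 1+x = x+1 by omega]
          push_cast
          linear_combination (-((1-a)^(x+1) * a^(m+1-x))) * hcast
        rw [Finset.sum_congr rfl hcongr, ← Finset.mul_sum]
        rw [show m+2 = m+1+1 from rfl, hbin]
        ring
      have hW : ∑ j ∈ Finset.range (m+2+1),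
          (((j:ℝ) - 3) * ((1-a)^j * a^(m+2-j) * ((m+2).choose j : ℝ)))
          = ((m:ℝ)+2)*(1-a) - 3 := by
        have hsplit : ∀ j ∈ Finset.range (m+2+1),
            ((j:ℝ) - 3) * ((1-a)^j * a^(m+2-j) * ((m+2).choose j : ℝ))
            = (j:ℝ) * ((1-a)^j * a^(m+2-j) * ((m+2).choose j : ℝ))
              - 3 * ((1-a)^j * a^(m+2-j) * ((m+2).choose j : ℝ)) := by
          intro j _; ring
        rw [Finset.sum_congr rfl hsplit, Finset.sum_sub_distrib, ← Finset.mul_sum, hS1, hS0]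
        ring
      have hX : 0 ≤ ((m:ℝ)+2)*(1-a) - 3 + 3*(a^2*a^m) + 2*(((m:ℝ)+2)*(1-a))*(a*a^m)
          + (((m:ℝ)+2)*((m:ℝ)+1)/2)*(1-a)^2*a^m := by
        rw [show m+2+1 = 4+(m-1) by omega, Finset.sum_range_add] at hW
        have hhead : ∑ j ∈ Finset.range 4,
            (((j:ℝ) - 3) * ((1-a)^j * a^(m+2-j) * ((m+2).choose j : ℝ)))
            = -3*(a^2*a^m) - 2*(((m:ℝ)+2)*(1-a))*(a*a^m)
              - (((m:ℝ)+2)*((m:ℝ)+1)/2)*(1-a)^2*a^m := by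
          rw [show (4:ℕ) = 3+1 from rfl, Finset.sum_range_succ, Finset.sum_range_succ,
            Finset.sum_range_succ, Finset.sum_range_one]
          rw [show m+2-0 = m+2 from rfl, show m+2-1 = m+1 from rfl,
            show m+2-2 = m from rfl]
          rw [Nat.choose_zero_right, Nat.choose_one_right, choose_two_cast]
          push_cast
          rw [show a^(m+2) = a^2*a^m by ring, show a^(m+1) = a*a^m by ring]
          ring
        have htail : 0 ≤ ∑ x ∈ Finset.range (m-1),
            ((((4+x : ℕ):ℝ) - 3) * ((1-a)^(4+x) * a^(m+2-(4+x)) * ((m+2).choose (4+x) : ℝ))) := by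
          apply Finset.sum_nonneg
          intro x _
          apply mul_nonneg
          · push_cast; linarith [Nat.cast_nonneg (α := ℝ) x]
          · exact mul_nonneg (mul_nonneg (pow_nonneg ht.le _) (pow_nonneg ha _))
              (Nat.cast_nonneg _)
        rw [hhead] at hW
        obtain ⟨TL, hTL⟩ : ∃ TL, (∑ x ∈ Finset.range (m-1),
            ((((4+x : ℕ):ℝ) - 3) * ((1-a)^(4+x) * a^(m+2-(4+x)) * ((m+2).choose (4+x) : ℝ)))) = TL :=
          ⟨_, rfl⟩
        rw [hTL] at hW htail
        linarith only [hW, htail]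
      have hG2L : 2*(1 - a^2*a^m - ((m:ℝ)+2)*(1-a)*(a*a^m)
          - (((m:ℝ)+2)*((m:ℝ)+1)/2)*(1-a)^2*a^m) ≤ a^2*a^m + ((m:ℝ)+2)*(1-a) - 1 := by
        linarith [hX, n3]
      have h1 := mul_le_mul_of_nonneg_left hG2L (mul_nonneg hM0 ht.le)
      have h2 : 0 < (3 - (m:ℝ)*(1-a))*(a^2*a^m + ((m:ℝ)+2)*(1-a) - 1) :=
        mul_pos (by linarith) hGpos
      linarith only [h1, h2]
    · -- case (i)
      have h1 := mul_le_mul_of_nonneg_left hL1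
        (by positivity : (0:ℝ) ≤ 2*(m:ℝ)*(1-a))
      linarith only [h1, hcase, n1, ht]
  -- set up u0
  obtain ⟨L, hLdef⟩ : ∃ x, (1 - a^2*a^m - ((m:ℝ)+2)*(1-a)*(a*a^m)
      - (((m:ℝ)+2)*((m:ℝ)+1)/2)*(1-a)^2*a^m) = x := ⟨_, rfl⟩
  obtain ⟨R, hRdef⟩ : ∃ x, (a^2*a^m + ((m:ℝ)+2)*(1-a) + ((m:ℝ)+2)*((m:ℝ)+1)*(1-a)^2 - 1) = x :=
    ⟨_, rfl⟩
  rw [hLdef] at hL hL1 hEL ⊢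
  rw [hRdef] at hR ⊢
  have hBstar' : 2*(m:ℝ)*(1-a)*L < 3*(a^2*a^m + ((m:ℝ)+2)*(1-a) - 1) := by
    rw [← hLdef]; exact hBstar
  have hRG : R = (a^2*a^m + ((m:ℝ)+2)*(1-a) - 1) + ((m:ℝ)+2)*((m:ℝ)+1)*(1-a)^2 := by
    rw [← hRdef]; ring
  set u0 : ℝ := 2*(1-a)*L / R with hu0
  have hu0pos : 0 < u0 := div_pos (by positivity) hR
  have hu0R : u0 * R = 2*(1-a)*L := div_mul_cancel₀ _ hR.ne'
  clear_value u0
  have hK2nn : (0:ℝ) ≤ ((m:ℝ)+2)*((m:ℝ)+1)/2 := by nlinarith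
  have hDiv : 6*(((m:ℝ)+2)*((m:ℝ)+1)/2)*(1-a)*L + 2*(m:ℝ)*(1-a)*L*Ee < 3*Ee*R := by
    have f1 : L ≤ (1-a)*Ee := by rw [hEL]; linarith [n3]
    have f2 : (6*(((m:ℝ)+2)*((m:ℝ)+1)/2)*(1-a))*L
        ≤ (6*(((m:ℝ)+2)*((m:ℝ)+1)/2)*(1-a))*((1-a)*Ee) :=
      mul_le_mul_of_nonneg_left f1 (by positivity)
    have f3 := mul_lt_mul_of_pos_right hBstar' hEpos
    rw [hRG]
    linarith only [f2, f3]
  have hstar : (((m:ℝ)+2)*((m:ℝ)+1)/2)*u0 + (m:ℝ)*Ee*u0/3 < Ee := by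
    have h3R : 0 < 3*R := by linarith
    have keyq : ((((m:ℝ)+2)*((m:ℝ)+1)/2)*u0 + (m:ℝ)*Ee*u0/3)*(3*R) < Ee*(3*R) := by
      have e1 : ((((m:ℝ)+2)*((m:ℝ)+1)/2)*u0 + (m:ℝ)*Ee*u0/3)*(3*R)
          = 3*((((m:ℝ)+2)*((m:ℝ)+1)/2))*(u0*R) + (m:ℝ)*Ee*(u0*R) := by ring
      rw [e1, hu0R]
      linarith only [hDiv]
    exact lt_of_mul_lt_mul_right keyq h3R.le
  have hq : (m:ℝ)*u0 < 3 := by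
    by_contra hcon
    push_neg at hcon
    have h2 : Ee*3 ≤ Ee*((m:ℝ)*u0) := mul_le_mul_of_nonneg_left hcon hEpos.le
    linarith only [hstar, h2, mul_nonneg hK2nn hu0pos.le, hEpos]
  -- the key power bound
  have hck : (u0+1)^(m+2) < 1 + ((m:ℝ)+2)*u0 + u0*Ee := by
    have hb2 := add_pow u0 1 (m+2)
    simp only [one_pow, mul_one] at hb2
    rw [show m+2+1 = 2+(m+1) by omega, Finset.sum_range_add] at hb2
    have hhead : ∑ x ∈ Finset.range 2, u0^x * ((m+2).choose x : ℝ) = 1 + ((m:ℝ)+2)*u0 := by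
      rw [show (2:ℕ) = 1+1 from rfl, Finset.sum_range_succ, Finset.sum_range_one]
      rw [Nat.choose_zero_right, Nat.choose_one_right]
      push_cast; ring
    rw [hhead] at hb2
    have hqnn : (0:ℝ) ≤ (m:ℝ)*u0/3 := by positivity
    have hterm : ∀ x ∈ Finset.range (m+1),
        u0^(2+x) * ((m+2).choose (2+x) : ℝ)
        ≤ ((((m:ℝ)+2)*((m:ℝ)+1)/2)*u0^2) * ((m:ℝ)*u0/3)^x := by
      intro x _
      have hcb : ((m+2).choose (2+x) : ℝ) * 3^x ≤ ((m+2).choose 2 : ℝ) * (m:ℝ)^x := by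
        exact_mod_cast choose_bound m x
      have h3x : (0:ℝ) < 3^x := by positivity
      have hcb' : ((m+2).choose (2+x) : ℝ) ≤ ((m+2).choose 2 : ℝ) * (m:ℝ)^x / 3^x :=
        (le_div_iff₀ h3x).mpr hcb
      calc u0^(2+x) * ((m+2).choose (2+x) : ℝ)
          ≤ u0^(2+x) * (((m+2).choose 2 : ℝ) * (m:ℝ)^x / 3^x) :=
            mul_le_mul_of_nonneg_left hcb' (pow_nonneg hu0pos.le _)
        _ = ((((m:ℝ)+2)*((m:ℝ)+1)/2)*u0^2) * ((m:ℝ)*u0/3)^x := by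
            rw [choose_two_cast, div_pow, mul_pow]; ring
    have hT : ∑ x ∈ Finset.range (m+1), u0^(2+x) * ((m+2).choose (2+x) : ℝ)
        ≤ ((((m:ℝ)+2)*((m:ℝ)+1)/2)*u0^2) * ∑ x ∈ Finset.range (m+1), ((m:ℝ)*u0/3)^x := by
      rw [Finset.mul_sum]
      exact Finset.sum_le_sum hterm
    have hq1 : (m:ℝ)*u0/3 < 1 := by linarith
    have h1q : 0 < 1 - (m:ℝ)*u0/3 := by linarith
    have hgs := geom_sum_mul ((m:ℝ)*u0/3) (m+1)
    have hp : 0 ≤ ((m:ℝ)*u0/3)^(m+1) := pow_nonneg hqnn _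
    obtain ⟨S, hSdef⟩ : ∃ S, (∑ x ∈ Finset.range (m+1), ((m:ℝ)*u0/3)^x) = S := ⟨_, rfl⟩
    obtain ⟨P, hPdef⟩ : ∃ P, ((m:ℝ)*u0/3)^(m+1) = P := ⟨_, rfl⟩
    obtain ⟨T, hTdef⟩ : ∃ T, (∑ x ∈ Finset.range (m+1), u0^(2+x) * ((m+2).choose (2+x) : ℝ)) = T :=
      ⟨_, rfl⟩
    obtain ⟨C, hCdef⟩ : ∃ C, (u0+1)^(m+2) = C := ⟨_, rfl⟩
    rw [hSdef, hPdef] at hgs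
    rw [hPdef] at hp
    rw [hSdef, hTdef] at hT
    rw [hTdef, hCdef] at hb2
    rw [hCdef]
    have hSnn : 0 ≤ S := by
      rw [← hSdef]; exact Finset.sum_nonneg (fun x _ => pow_nonneg hqnn x)
    have hS1q : S*(1 - (m:ℝ)*u0/3) ≤ 1 := by linarith only [hgs, hp]
    have key2 : (((m:ℝ)+2)*((m:ℝ)+1)/2)*u0^2 < u0*Ee*(1 - (m:ℝ)*u0/3) := by
      have hmul := mul_lt_mul_of_pos_right hstar hu0pos
      linarith only [hmul]
    have key3 : ((((m:ℝ)+2)*((m:ℝ)+1)/2)*u0^2) * (S*(1 - (m:ℝ)*u0/3))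
        ≤ ((((m:ℝ)+2)*((m:ℝ)+1)/2)*u0^2)*1 :=
      mul_le_mul_of_nonneg_left hS1q (by positivity)
    have key4 : (((((m:ℝ)+2)*((m:ℝ)+1)/2)*u0^2) * S) *(1 - (m:ℝ)*u0/3)
        < (u0*Ee)*(1 - (m:ℝ)*u0/3) := by linarith only [key2, key3]
    have hfin : ((((m:ℝ)+2)*((m:ℝ)+1)/2)*u0^2) * S < u0*Ee :=
      lt_of_mul_lt_mul_right key4 h1q.le
    linarith only [hb2, hT, hfin]
  -- conclude u0 < b - 1
  have hu : u0 < b - 1 := by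
    by_contra hcon
    push_neg at hcon
    have hbc : b ≤ u0 + 1 := by linarith
    have hSbSc : ∑ i ∈ Finset.Icc 1 (m+1), b^i ≤ ∑ i ∈ Finset.Icc 1 (m+1), (u0+1)^i :=
      Finset.sum_le_sum (fun i _ => pow_le_pow_left₀ (by linarith : (0:ℝ) ≤ b) hbc i)
    have hgc : u0 * (∑ i ∈ Finset.Icc 1 (m+1), (u0+1)^i) = (u0+1)^(m+2) - (u0+1) := by
      rw [show Finset.Icc 1 (m+1) = Finset.Ico 1 (m+2) from (Finset.Ico_add_one_right_eq_Icc 1 (m+1)).symm]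
      rw [Finset.sum_Ico_eq_sum_range, show m+2-1 = m+1 from rfl]
      have h3 : ∑ i ∈ Finset.range (m+1), (u0+1)^(1+i)
          = (u0+1) * ∑ i ∈ Finset.range (m+1), (u0+1)^i := by
        rw [Finset.mul_sum]
        exact Finset.sum_congr rfl (fun i _ => by rw [pow_add, pow_one])
      have h4 := geom_sum_mul (u0+1) (m+1)
      rw [h3, show (u0+1)^(m+2) = (u0+1)^(m+1)*(u0+1) by ring]
      linear_combination (u0+1) * h4
    obtain ⟨Sc, hScdef⟩ : ∃ Sc, (∑ i ∈ Finset.Icc 1 (m+1), (u0+1)^i) = Sc := ⟨_, rfl⟩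
    obtain ⟨C, hCdef⟩ : ∃ C, (u0+1)^(m+2) = C := ⟨_, rfl⟩
    rw [hScdef, hCdef] at hgc
    rw [hCdef] at hck
    rw [hScdef, hyp'] at hSbSc
    have h6 : u0 * Sc < u0 * (((m:ℝ)+1) + Ee) := by
      rw [hgc]; linarith only [hck]
    have hScLt : Sc < ((m:ℝ)+1) + Ee := lt_of_mul_lt_mul_left h6 hu0pos.le
    linarith
  have hfinal := mul_lt_mul_of_pos_right hu hR
  rw [hu0R] at hfinal
  linarith only [hfinal]
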